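/- For all natural numbers i, j, k, m satisfying one of the two-minus-sign resonance relations ω_i + ω_j = ω_k + ω_m, ω_i + ω_k = ω_j + ω_m, or ω_i + ω_m = ω_j + ω_k, one has C_{ijkm} = ω_{min{i,j,k,m}} = min{i, j, k, m} + 1. -/

import Mathlib

open MeasureTheory

/-- Chebyshev polynomials of the second kind, as real-valued functions. -/
noncomputable def chebU : ℕ → ℝ → ℝ
  | 0, _ => 1
  | 1, y => 2 * y
  | n + 2, y => 2 * y * chebU (n + 1) y - chebU n y

open Real intervalIntegral Finset

lemma chebU_continuous (n : ℕ) : Continuous (chebU n) := by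
  induction n using Nat.twoStepInduction with
  | zero => simpa [chebU] using continuous_const
  | one => exact (continuous_const.mul continuous_id : Continuous fun y : ℝ => 2 * y)
  | more n h1 h2 =>
      show Continuous (fun y => 2 * y * chebU (n+1) y - chebU n y)
      exact ((continuous_const.mul continuous_id).mul h2).sub h1

lemma chebU_cos (n : ℕ) (θ : ℝ) : chebU n (Real.cos θ) * Real.sin θ = Real.sin ((n+1) * θ) := by
  induction n using Nat.twoStepInduction with
  | zero => simp [chebU]
  | one =>
      show 2 * Real.cos θ * Real.sin θ = _
      norm_num
      rw [Real.sin_two_mul]; ring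
  | more n h1 h2 =>
      have key : Real.sin ((n+2+1:ℕ) * θ) + Real.sin ((n+1:ℕ)*θ) =
          2 * Real.cos θ * Real.sin ((n+1+1:ℕ) * θ) := by
        push_cast
        have e1 : ((n:ℝ)+2+1) * θ = ((n:ℝ)+1+1) * θ + θ := by ring
        have e2 : ((n:ℝ)+1) * θ = ((n:ℝ)+1+1) * θ - θ := by ring
        rw [e1, e2, Real.sin_add, Real.sin_sub]; ring
      show (2 * Real.cos θ * chebU (n+1) (Real.cos θ) - chebU n (Real.cos θ)) * Real.sin θ = _
      have : (2 * Real.cos θ * chebU (n+1) (Real.cos θ) - chebU n (Real.cos θ)) * Real.sin θ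
          = 2 * Real.cos θ * (chebU (n+1) (Real.cos θ) * Real.sin θ)
            - chebU n (Real.cos θ) * Real.sin θ := by ring
      rw [this, h2, h1]
      push_cast at key ⊢
      linarith [key]

lemma two_mul_chebU (n : ℕ) (hn : 1 ≤ n) (y : ℝ) :
    2 * y * chebU n y = chebU (n+1) y + chebU (n-1) y := by
  obtain ⟨t, rfl⟩ : ∃ t, n = t + 1 := ⟨n - 1, by omega⟩
  show 2 * y * chebU (t+1) y = chebU (t+2) y + chebU t y
  show 2 * y * chebU (t+1) y = (2 * y * chebU (t+1) y - chebU t y) + chebU t y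
  ring

lemma chebU_mul_le (b : ℕ) : ∀ a, b ≤ a → ∀ y : ℝ,
    chebU a y * chebU b y = ∑ p ∈ Finset.range (b+1), chebU (a + b - 2*p) y := by
  induction b using Nat.twoStepInduction with
  | zero => intro a _ y; simp [chebU]
  | one =>
      intro a ha y
      rw [Finset.sum_range_succ, Finset.sum_range_one]
      show chebU a y * (2 * y) = chebU (a+1) y + chebU (a+1-2) y
      have := two_mul_chebU a ha y
      have h2 : a + 1 - 2 = a - 1 := by omega
      rw [h2]; linarith [this]
  | more b ih1 ih2 =>
      intro a ha y
      have key : chebU a y * chebU (b+2) y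
          = 2 * y * (chebU a y * chebU (b+1) y) - chebU a y * chebU b y := by
        show chebU a y * (2 * y * chebU (b+1) y - chebU b y) = _
        ring
      rw [key, ih2 a (by omega) y, ih1 a (by omega) y, Finset.mul_sum]
      have step : ∀ p ∈ Finset.range (b+1+1), 2 * y * chebU (a + (b+1) - 2*p) y
          = chebU (a + (b+2) - 2*p) y + chebU (a + b - 2*p) y := by
        intro p hp
        rw [Finset.mem_range] at hp
        have h1 : 1 ≤ a + (b+1) - 2*p := by omega
        rw [two_mul_chebU _ h1 y]
        congr 2 <;> omega
      rw [Finset.sum_congr rfl step, Finset.sum_add_distrib,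
        Finset.sum_range_succ (fun p => chebU (a + (b+2) - 2*p) y) (b+2),
        Finset.sum_range_succ (fun p => chebU (a + b - 2*p) y) (b+1)]
      have e3 : a + (b+2) - 2*(b+2) = a + b - 2*(b+1) := by omega
      simp only [e3]
      ring

lemma chebU_mul (a b : ℕ) (y : ℝ) :
    chebU a y * chebU b y = ∑ p ∈ Finset.range (min a b + 1), chebU (a + b - 2*p) y := by
  rcases le_total b a with h | h
  · rw [chebU_mul_le b a h y, min_eq_right h]
  · rw [mul_comm, chebU_mul_le a b h y, min_eq_left h, Nat.add_comm b a]

lemma integral_cos_nat (n : ℕ) (hn : n ≠ 0) :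
    ∫ θ in (0:ℝ)..Real.pi, Real.cos (n * θ) = 0 := by
  have hc : (n:ℝ) ≠ 0 := Nat.cast_ne_zero.mpr hn
  rw [intervalIntegral.integral_comp_mul_left Real.cos hc]
  simp [integral_cos, Real.sin_nat_mul_pi]

lemma integral_sin_mul_sin' (a b : ℕ) (hab : b < a) :
    ∫ θ in (0:ℝ)..Real.pi, Real.sin ((a+1) * θ) * Real.sin ((b+1) * θ) = 0 := by
  have key : ∀ θ : ℝ, Real.sin ((a+1) * θ) * Real.sin ((b+1) * θ)
      = (Real.cos (((a - b : ℕ)) * θ) - Real.cos (((a + b + 2 : ℕ)) * θ)) / 2 := by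
    intro θ
    have e1 : ((a - b : ℕ) : ℝ) * θ = (a+1) * θ - (b+1) * θ := by
      have : ((a - b : ℕ) : ℝ) = (a : ℝ) - b := by
        push_cast [Nat.cast_sub hab.le]; ring
      rw [this]; ring
    have e2 : ((a + b + 2 : ℕ) : ℝ) * θ = (a+1) * θ + (b+1) * θ := by push_cast; ring
    rw [e1, e2, Real.cos_sub, Real.cos_add]; ring
  rw [intervalIntegral.integral_congr (fun θ _ => key θ)]
  have h1 : IntervalIntegrable (fun θ : ℝ => Real.cos (((a - b : ℕ)) * θ)) volume 0 Real.pi :=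
    (Real.continuous_cos.comp (continuous_const.mul continuous_id)).intervalIntegrable _ _
  have h2 : IntervalIntegrable (fun θ : ℝ => Real.cos (((a + b + 2 : ℕ)) * θ)) volume 0 Real.pi :=
    (Real.continuous_cos.comp (continuous_const.mul continuous_id)).intervalIntegrable _ _
  rw [intervalIntegral.integral_div, intervalIntegral.integral_sub h1 h2,
    integral_cos_nat _ (by omega), integral_cos_nat _ (by omega)]
  norm_num

lemma integral_sin_mul_sin (a b : ℕ) :
    ∫ θ in (0:ℝ)..Real.pi, Real.sin ((a+1) * θ) * Real.sin ((b+1) * θ)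
      = if a = b then Real.pi / 2 else 0 := by
  rcases lt_trichotomy a b with h | rfl | h
  · rw [if_neg h.ne]
    refine Eq.trans ?_ (integral_sin_mul_sin' b a h)
    exact intervalIntegral.integral_congr (fun θ _ => by ring)
  · rw [if_pos rfl]
    have key : ∀ θ : ℝ, Real.sin ((a+1) * θ) * Real.sin ((a+1) * θ)
        = (1 - Real.cos (((2*a+2 : ℕ)) * θ)) / 2 := by
      intro θ
      have e2 : ((2*a+2 : ℕ) : ℝ) * θ = (a+1) * θ + (a+1) * θ := by push_cast; ring
      have pyth := Real.sin_sq_add_cos_sq ((a+1) * θ)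
      rw [e2, Real.cos_add]
      linear_combination pyth / 2
    rw [intervalIntegral.integral_congr (fun θ _ => key θ)]
    have h2 : IntervalIntegrable (fun θ : ℝ => Real.cos (((2*a+2 : ℕ)) * θ)) volume 0 Real.pi :=
      (Real.continuous_cos.comp (continuous_const.mul continuous_id)).intervalIntegrable _ _
    rw [intervalIntegral.integral_div, intervalIntegral.integral_sub
      (intervalIntegrable_const) h2, integral_cos_nat _ (by omega)]
    simp
  · rw [if_neg h.ne', integral_sin_mul_sin' a b h]

lemma chebU_orth (r s : ℕ) :
    ∫ y in (-1:ℝ)..1, chebU r y * chebU s y * Real.sqrt (1 - y^2)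
      = if r = s then Real.pi / 2 else 0 := by
  have sub := intervalIntegral.integral_comp_smul_deriv
    (f := Real.cos) (f' := fun θ => -Real.sin θ) (a := 0) (b := Real.pi)
    (g := fun y => chebU r y * chebU s y * Real.sqrt (1 - y^2))
    (fun x _ => Real.hasDerivAt_cos x) (Real.continuous_sin.neg.continuousOn)
    (((chebU_continuous r).mul (chebU_continuous s)).mul
      (Real.continuous_sqrt.comp (continuous_const.sub (continuous_pow 2))))
  rw [Real.cos_zero, Real.cos_pi, intervalIntegral.integral_symm (-1 : ℝ) 1] at sub
  have key : Set.EqOn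
      (fun x : ℝ => (fun θ : ℝ => -Real.sin θ) x •
        ((fun y => chebU r y * chebU s y * Real.sqrt (1 - y^2)) ∘ Real.cos) x)
      (fun θ : ℝ => -(Real.sin (((r:ℝ)+1) * θ) * Real.sin (((s:ℝ)+1) * θ)))
      (Set.uIcc 0 Real.pi) := by
    intro θ hθ
    rw [Set.uIcc_of_le Real.pi_pos.le] at hθ
    have hs : 0 ≤ Real.sin θ := Real.sin_nonneg_of_nonneg_of_le_pi hθ.1 hθ.2
    have e1 : Real.sqrt (1 - Real.cos θ ^ 2) = Real.sin θ := by
      rw [show 1 - Real.cos θ ^ 2 = Real.sin θ ^ 2 by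
        have := Real.sin_sq_add_cos_sq θ; linarith, Real.sqrt_sq hs]
    have c1 := chebU_cos r θ
    have c2 := chebU_cos s θ
    show -Real.sin θ • (chebU r (Real.cos θ) * chebU s (Real.cos θ)
      * Real.sqrt (1 - Real.cos θ ^ 2)) = _
    rw [e1, smul_eq_mul]
    beta_reduce
    rw [← c1, ← c2]
    ring
  rw [intervalIntegral.integral_congr key, intervalIntegral.integral_neg, neg_inj] at sub
  rw [← sub, integral_sin_mul_sin]

/-- Fourier coefficients of the cubic conformal wave equation on the Einstein cylinder
in spherical symmetry. -/
noncomputable def Ccoef (i j k m : ℕ) : ℝ :=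
  (2 / Real.pi) *
    ∫ y in (-1:ℝ)..1, chebU i y * chebU j y * chebU k y * chebU m y * Real.sqrt (1 - y ^ 2)

lemma range_inter_range (A B : ℕ) : Finset.range A ∩ Finset.range B = Finset.range (min A B) := by
  ext x; simp [Finset.mem_range]

lemma Ccoef_case1 (i j k m : ℕ) (hr : i + j = k + m) :
    Ccoef i j k m = (min (min i j) (min k m) : ℝ) + 1 := by
  set A := min i j + 1 with hA
  set B := min k m + 1 with hB
  have expand : Set.EqOn
      (fun y : ℝ => chebU i y * chebU j y * chebU k y * chebU m y * Real.sqrt (1 - y ^ 2))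
      (fun y : ℝ => ∑ pq ∈ Finset.range A ×ˢ Finset.range B,
        chebU (i + j - 2*pq.1) y * chebU (k + m - 2*pq.2) y * Real.sqrt (1 - y ^ 2))
      (Set.uIcc (-1:ℝ) 1) := by
    intro y _
    beta_reduce
    rw [Finset.sum_product]
    have e0 : chebU i y * chebU j y * chebU k y * chebU m y * Real.sqrt (1 - y ^ 2)
        = (chebU i y * chebU j y) * ((chebU k y * chebU m y) * Real.sqrt (1 - y ^ 2)) := by ring
    rw [e0, chebU_mul i j y, chebU_mul k m y, Finset.sum_mul]
    refine Finset.sum_congr rfl fun p _ => ?_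
    rw [Finset.sum_mul, Finset.mul_sum]
    exact Finset.sum_congr rfl fun q _ => by ring
  have integ : ∀ pq : ℕ × ℕ, pq ∈ Finset.range A ×ˢ Finset.range B →
      IntervalIntegrable (fun y : ℝ => chebU (i + j - 2*pq.1) y * chebU (k + m - 2*pq.2) y
        * Real.sqrt (1 - y ^ 2)) volume (-1) 1 := by
    intro pq _
    exact (((chebU_continuous _).mul (chebU_continuous _)).mul
      (Real.continuous_sqrt.comp (continuous_const.sub (continuous_pow 2)))).intervalIntegrable _ _
  have hI : (∫ y in (-1:ℝ)..1,
        chebU i y * chebU j y * chebU k y * chebU m y * Real.sqrt (1 - y ^ 2))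
      = ∑ pq ∈ Finset.range A ×ˢ Finset.range B,
        (if i + j - 2*pq.1 = k + m - 2*pq.2 then Real.pi / 2 else 0) := by
    rw [intervalIntegral.integral_congr expand,
      intervalIntegral.integral_finset_sum integ]
    exact Finset.sum_congr rfl fun pq _ => chebU_orth _ _
  have hcond : ∀ pq : ℕ × ℕ, pq ∈ Finset.range A ×ˢ Finset.range B →
      (if i + j - 2*pq.1 = k + m - 2*pq.2 then Real.pi / 2 else 0)
        = (if pq.1 = pq.2 then Real.pi / 2 else 0) := by
    intro pq hpq
    rw [Finset.mem_product, Finset.mem_range, Finset.mem_range] at hpq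
    congr 1
    have h1 : pq.1 ≤ min i j := by omega
    have h2 : pq.2 ≤ min k m := by omega
    simp only [eq_iff_iff]
    omega
  have hsum : ∑ pq ∈ Finset.range A ×ˢ Finset.range B,
      (if i + j - 2*pq.1 = k + m - 2*pq.2 then Real.pi / 2 else 0)
      = ((min A B : ℕ) : ℝ) * (Real.pi / 2) := by
    rw [Finset.sum_congr rfl hcond, Finset.sum_product]
    have inner : ∀ p : ℕ, ∑ q ∈ Finset.range B, (if p = q then Real.pi / 2 else 0)
        = if p ∈ Finset.range B then Real.pi / 2 else 0 := by
      intro p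
      exact Finset.sum_ite_eq (Finset.range B) p (fun _ => Real.pi / 2)
    rw [Finset.sum_congr rfl fun p _ => inner p, Finset.sum_ite_mem,
      _root_.range_inter_range, Finset.sum_const, Finset.card_range, nsmul_eq_mul]
  rw [Ccoef, hI, hsum]
  have hπ : Real.pi ≠ 0 := Real.pi_ne_zero
  have e : min A B = min (min i j) (min k m) + 1 := by omega
  rw [e]
  push_cast
  field_simp

lemma Ccoef_swap_jk (i j k m : ℕ) : Ccoef i j k m = Ccoef i k j m := by
  unfold Ccoef
  congr 1
  exact intervalIntegral.integral_congr fun y _ => by ring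

lemma Ccoef_swap_jm (i j k m : ℕ) : Ccoef i j k m = Ccoef i m j k := by
  unfold Ccoef
  congr 1
  exact intervalIntegral.integral_congr fun y _ => by ring

/-- On resonant indices with two minus signs, the Fourier coefficient equals
`ω_{min{i,j,k,m}} = min{i,j,k,m} + 1`. -/
theorem Ccoef_eq_omega_min_of_two_plus_two_resonance (i j k m : ℕ)
    (h : (i + 1) + (j + 1) = (k + 1) + (m + 1) ∨
         (i + 1) + (k + 1) = (j + 1) + (m + 1) ∨
         (i + 1) + (m + 1) = (j + 1) + (k + 1)) :
    Ccoef i j k m = (min (min i j) (min k m) : ℝ) + 1 := by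
  rcases h with h | h | h
  · exact Ccoef_case1 i j k m (by omega)
  · rw [Ccoef_swap_jk, Ccoef_case1 i k j m (by omega)]
    norm_cast
    omega
  · rw [Ccoef_swap_jm, Ccoef_case1 i m j k (by omega)]
    norm_cast
    omega
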